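/- Let A be an s × r matrix over F_q[t] with r > s and of full rank s, and let N = max_{i,j} deg A_{ij}. Let D be the greatest common divisor of all s × s subminors (maximal minors) of A. Then there exists a nonzero vector x = (x_1, ..., x_r) ∈ F_q[t]^r with A x = 0 and max_i deg x_i ≤ (s·N − deg D)/(r − s). -/

import Mathlib

open Polynomial

/-- Thue–Siegel lemma over `F_q[t]`: if `A` is an `s × r` matrix over `F_q[t]` with `r > s`,
of full rank `s`, all of whose entries have degree at most `N`, and `D` is the gcd of the
determinants of all `s × s` submatrices of `A` (obtained by choosing `s` of the `r` columns),
then there is a nonzero `x ∈ F_q[t]^r` with `Ax = 0` and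
`deg x_i ≤ (s·N − deg D)/(r − s)` for all `i`. -/
private lemma siegel_counting {Fq : Type*} [Field Fq] {s r m : ℕ} (Nrow : Fin s → ℕ)
    (A : Matrix (Fin s) (Fin r) (Polynomial Fq))
    (hdeg : ∀ i j, (A i j).degree ≤ (Nrow i : ℕ))
    (hm : s * m + ∑ i, Nrow i < r * m) :
    ∃ x : Fin r → Polynomial Fq, x ≠ 0 ∧ A.mulVec x = 0 ∧ ∀ j, (x j).degree < (m : ℕ) := by
  classical
  haveI : ∀ n : ℕ, FiniteDimensional Fq (degreeLT Fq n) := fun n =>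
    Module.Finite.equiv (degreeLTEquiv Fq n).symm
  have hfr : ∀ n : ℕ, Module.finrank Fq (degreeLT Fq n) = n := fun n => by
    rw [(degreeLTEquiv Fq n).finrank_eq, Module.finrank_fin_fun]
  have hmem : ∀ (i : Fin s) (x : Π _ : Fin r, degreeLT Fq m),
      (∑ j, A i j * ((x j : Polynomial Fq))) ∈ degreeLT Fq (m + Nrow i) := by
    intro i x
    rw [Polynomial.mem_degreeLT]
    refine lt_of_le_of_lt (Polynomial.degree_sum_le _ _) ?_
    rw [Finset.sup_lt_iff (by exact_mod_cast WithBot.bot_lt_coe (m + Nrow i))]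
    intro j _
    rcases eq_or_ne (A i j * ((x j : Polynomial Fq))) 0 with h | h
    · rw [h, Polynomial.degree_zero]
      exact_mod_cast WithBot.bot_lt_coe (m + Nrow i)
    · have hA : A i j ≠ 0 := left_ne_zero_of_mul h
      have hx : (x j : Polynomial Fq) ≠ 0 := right_ne_zero_of_mul h
      have h1 : (A i j).natDegree ≤ Nrow i := natDegree_le_iff_degree_le.2 (hdeg i j)
      have h2 : (x j : Polynomial Fq).natDegree < m :=
        (natDegree_lt_iff_degree_lt hx).2 (Polynomial.mem_degreeLT.1 (x j).2)
      calc (A i j * ((x j : Polynomial Fq))).degree ≤ _ := Polynomial.degree_mul_le _ _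
        _ ≤ ((A i j).natDegree : WithBot ℕ) + ((x j : Polynomial Fq)).natDegree := by
            rw [Polynomial.degree_eq_natDegree hA, Polynomial.degree_eq_natDegree hx]
        _ < ((m + Nrow i : ℕ) : WithBot ℕ) := by
            rw [← Nat.cast_add]
            exact_mod_cast by omega
  let L : (Π _ : Fin r, degreeLT Fq m) →ₗ[Fq] (Π i : Fin s, degreeLT Fq (m + Nrow i)) :=
    { toFun := fun x => fun i => ⟨∑ j, A i j * ((x j : Polynomial Fq)), hmem i x⟩
      map_add' := by
        intro x y; funext i; apply Subtype.ext
        push_cast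
        simp [mul_add, Finset.sum_add_distrib]
      map_smul' := by
        intro c x; funext i; apply Subtype.ext
        push_cast
        simp [Finset.smul_sum, mul_smul_comm] }
  have hker : LinearMap.ker L ≠ ⊥ := by
    intro hk
    have hinj : Function.Injective L := LinearMap.ker_eq_bot.1 hk
    have := LinearMap.finrank_le_finrank_of_injective hinj
    rw [Module.finrank_pi_fintype, Module.finrank_pi_fintype] at this
    simp only [hfr] at this
    have hsum : ∑ i : Fin s, (m + Nrow i) = s * m + ∑ i, Nrow i := by
      rw [Finset.sum_add_distrib]
      simp [Finset.sum_const, mul_comm]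
    have hrm : ∑ _j : Fin r, m = r * m := by simp [Finset.sum_const]
    rw [hsum, hrm] at this
    omega
  obtain ⟨y, hy, hy0⟩ := (Submodule.ne_bot_iff _).1 hker
  refine ⟨fun j => (y j : Polynomial Fq), ?_, ?_, ?_⟩
  · intro h0
    apply hy0
    funext j
    have := congrFun h0 j
    exact Subtype.ext this
  · funext i
    have := congrFun (LinearMap.mem_ker.1 hy) i
    have h2 : (∑ j, A i j * ((y j : Polynomial Fq))) = 0 := by
      simpa [L] using congrArg Subtype.val this
    simpa [Matrix.mulVec, dotProduct] using h2
  · intro j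
    exact Polynomial.mem_degreeLT.1 (y j).2


lemma det_degree_le {Fq : Type*} [Field Fq] {s : ℕ} (M : Matrix (Fin s) (Fin s) (Polynomial Fq))
    (Nr : Fin s → ℕ) (h : ∀ i j, (M i j).degree ≤ (Nr i : ℕ)) :
    M.det.degree ≤ ((∑ i, Nr i : ℕ) : WithBot ℕ) := by
  classical
  rw [Matrix.det_apply']
  refine le_trans (Polynomial.degree_sum_le _ _) ?_
  rw [Finset.sup_le_iff]
  intro σ _
  refine le_trans (Polynomial.degree_mul_le _ _) ?_
  have h1 : (((Equiv.Perm.sign σ : ℤ) : Polynomial Fq)).degree ≤ 0 := by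
    rcases Int.units_eq_one_or (Equiv.Perm.sign σ) with hs | hs <;> simp [hs]
  have h2 : (∏ i, M (σ i) i).degree ≤ ((∑ i, Nr i : ℕ) : WithBot ℕ) := by
    refine le_trans (Polynomial.degree_prod_le _ _) ?_
    have : ∑ i, (M (σ i) i).degree ≤ ∑ i, ((Nr (σ i) : ℕ) : WithBot ℕ) :=
      Finset.sum_le_sum (fun i _ => h (σ i) i)
    refine le_trans this (le_of_eq ?_)
    rw [← Nat.cast_sum]
    norm_cast
    exact Equiv.sum_comp σ Nr
  calc _ ≤ (0 : WithBot ℕ) + ((∑ i, Nr i : ℕ) : WithBot ℕ) := add_le_add h1 h2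
    _ = _ := by rw [zero_add]

lemma rows_dependent_of_minors_zero {K : Type*} [Field K] {s r : ℕ}
    (M : Matrix (Fin s) (Fin r) K)
    (h : ∀ c : Fin s ↪ Fin r, (M.submatrix id c).det = 0) :
    ∃ g : Fin s → K, (∀ j, ∑ i, g i * M i j = 0) ∧ ∃ i, g i ≠ 0 := by
  classical
  by_contra hcon
  push_neg at hcon
  have hli : LinearIndependent K (fun i => M i) := by
    rw [Fintype.linearIndependent_iff]
    intro g hg i
    refine hcon g (fun j => ?_) i
    have := congrFun hg j
    simpa using this
  -- column span is everything
  have hrT : Module.finrank K ↥(LinearMap.range (Matrix.mulVecLin M.transpose)) = s := by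
    rw [Matrix.range_mulVecLin, Matrix.col_transpose, Matrix.row]
    have := finrank_span_eq_card hli
    simpa using this
  have hcolspan : Submodule.span K (Set.range M.transpose) = ⊤ := by
    have hrk : M.transpose.rank = s := by rw [Matrix.rank, hrT]
    have : M.rank = s := by rw [← Matrix.rank_transpose, hrk]
    rw [Matrix.rank] at this
    change Submodule.span K (Set.range M.col) = ⊤
    rw [← Matrix.range_mulVecLin]
    apply Submodule.eq_top_of_finrank_eq
    rw [this, Module.finrank_fin_fun]
  -- extract a basis among the columns
  obtain ⟨b, hbsub, hbspan, hbli⟩ := exists_linearIndependent K (Set.range M.transpose)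
  rw [hcolspan] at hbspan
  have hbfin : b.Finite := hbli.setFinite
  haveI := hbfin.fintype
  have hcard : Fintype.card b = s := by
    have h1 := finrank_span_set_eq_card hbli
    rw [hbspan] at h1
    simp only [finrank_top, Module.finrank_fin_fun, Set.toFinset_card] at h1
    omega
  let eqv : Fin s ≃ b := (Fintype.equivFinOfCardEq hcard).symm
  have hchoose : ∀ v : b, ∃ j : Fin r, M.transpose j = (v : Fin s → K) := fun v => hbsub v.2
  let ch : b → Fin r := fun v => (hchoose v).choose
  have hch : ∀ v : b, M.transpose (ch v) = (v : Fin s → K) := fun v => (hchoose v).choose_spec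
  have hchinj : Function.Injective ch := by
    intro v w hvw
    apply Subtype.ext
    rw [← hch v, ← hch w, hvw]
  let c : Fin s ↪ Fin r := ⟨fun i => ch (eqv i), hchinj.comp (eqv.injective)⟩
  have hdet := h c
  have hcols : LinearIndependent K (fun i : Fin s => ((eqv i : b) : Fin s → K)) :=
    hbli.comp eqv eqv.injective
  rw [← Matrix.exists_mulVec_eq_zero_iff] at hdet
  obtain ⟨v, hv0, hvz⟩ := hdet
  apply hv0
  have hsum : ∑ j, v j • ((eqv j : b) : Fin s → K) = 0 := by
    funext i
    have hz := congrFun hvz i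
    simp only [Matrix.mulVec, dotProduct, Matrix.submatrix_apply, id_eq,
      Pi.zero_apply] at hz
    have : ∀ j : Fin s, ((eqv j : b) : Fin s → K) i = M i (c j) := by
      intro j
      rw [← hch (eqv j)]
      rfl
    calc (∑ j, v j • ((eqv j : b) : Fin s → K)) i
        = ∑ j, v j * ((eqv j : b) : Fin s → K) i := by simp
      _ = ∑ j, M i (c j) * v j := by
          refine Finset.sum_congr rfl (fun j _ => ?_)
          rw [this j, mul_comm]
      _ = 0 := hz
  funext j
  exact Fintype.linearIndependent_iff.1 hcols v hsum j

noncomputable def gcdMinors {Fq : Type*} [Field Fq] [DecidableEq Fq] {s r : ℕ}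
    (A : Matrix (Fin s) (Fin r) (Polynomial Fq)) : Polynomial Fq :=
  Finset.univ.gcd fun c : Fin s ↪ Fin r => (A.submatrix id c).det

lemma siegel_main {Fq : Type*} [Field Fq] [DecidableEq Fq] {s r : ℕ} (hrs : s < r) :
    ∀ (n : ℕ) (Nrow : Fin s → ℕ) (A : Matrix (Fin s) (Fin r) (Polynomial Fq)),
      (∑ i, Nrow i) = n → (∀ i j, (A i j).degree ≤ (Nrow i : ℕ)) →
      ∃ x : Fin r → Polynomial Fq, x ≠ 0 ∧ A.mulVec x = 0 ∧
        ∀ j, (x j).degree < (((∑ i, Nrow i) - (gcdMinors A).natDegree) / (r - s) + 1 : ℕ) := by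
  intro n
  induction n using Nat.strong_induction_on with
  | _ n IH =>
  intro Nrow A hsum hdeg
  by_cases hd : (gcdMinors A).natDegree = 0
  · -- counting case
    rw [hd]
    obtain ⟨k, hk1, hk⟩ : ∃ k, 0 < k ∧ r = s + k := ⟨r - s, by omega, by omega⟩
    have hrsk : r - s = k := by omega
    have hmm : s * (((∑ i, Nrow i) - 0) / (r - s) + 1) + ∑ i, Nrow i
        < r * (((∑ i, Nrow i) - 0) / (r - s) + 1) := by
      rw [hrsk, hk, Nat.sub_zero]
      set S := ∑ i, Nrow i
      have h1 := Nat.div_add_mod S k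
      have h2 : S % k < k := Nat.mod_lt _ hk1
      have h3 : k * (S / k + 1) = k * (S / k) + k := by ring
      have h4 : (s + k) * (S / k + 1) = s * (S / k + 1) + k * (S / k + 1) := by ring
      omega
    exact siegel_counting Nrow A hdeg hmm
  · -- reduction case
    classical
    set G := gcdMinors A with hGdef
    have hGne : G ≠ 0 := fun h => hd (by rw [h, Polynomial.natDegree_zero])
    have hminor : ∃ c₀ : Fin s ↪ Fin r, (A.submatrix id c₀).det ≠ 0 := by
      by_contra hall
      push_neg at hall
      exact hGne (Finset.gcd_eq_zero_iff.2 fun c _ => hall c)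
    obtain ⟨c₀, hc₀⟩ := hminor
    have hGdvd : ∀ c : Fin s ↪ Fin r, G ∣ (A.submatrix id c).det := fun c =>
      Finset.gcd_dvd (Finset.mem_univ c)
    have hdlesum : G.natDegree ≤ ∑ i, Nrow i := by
      have h1 : (A.submatrix id c₀).det.natDegree ≤ ∑ i, Nrow i :=
        natDegree_le_iff_degree_le.2 (det_degree_le (A.submatrix id c₀) Nrow
          (fun i j => hdeg i (c₀ j)))
      exact le_trans (Polynomial.natDegree_le_of_dvd (hGdvd c₀) hc₀) h1
    have hGnu : ¬IsUnit G := fun hu => hd (Polynomial.natDegree_eq_zero_of_isUnit hu)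
    obtain ⟨p0, hp0irr, hp0dvd⟩ := WfDvdMonoid.exists_irreducible_factor hGnu hGne
    have hp0ne : p0 ≠ 0 := hp0irr.ne_zero
    set q := normalize p0 with hqdef
    have hqmonic : q.Monic := Polynomial.monic_normalize hp0ne
    have hqirr : Irreducible q := (associated_normalize p0).irreducible hp0irr
    have hqdvdG : q ∣ G := (normalize_dvd_iff).2 hp0dvd
    have hqne : q ≠ 0 := hqmonic.ne_zero
    have hq1 : q.natDegree ≠ 0 := by
      intro h0
      exact hqirr.not_isUnit (by rw [hqmonic.natDegree_eq_zero.1 h0]; exact isUnit_one)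
    haveI hmax : (Ideal.span {q} : Ideal (Polynomial Fq)).IsMaximal :=
      PrincipalIdealRing.isMaximal_of_irreducible hqirr
    letI : Field (Polynomial Fq ⧸ Ideal.span {q}) := Ideal.Quotient.field _
    set π := Ideal.Quotient.mk (Ideal.span {q} : Ideal (Polynomial Fq)) with hπdef
    have hmap0 : ∀ c : Fin s ↪ Fin r, ((A.map π).submatrix id c).det = 0 := by
      intro c
      have h1 : (A.map π).submatrix id ⇑c = (A.submatrix id ⇑c).map π := by
        ext i j; rfl
      rw [h1, ← RingHom.mapMatrix_apply, ← RingHom.map_det,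
        Ideal.Quotient.eq_zero_iff_mem, Ideal.mem_span_singleton]
      exact dvd_trans hqdvdG (hGdvd c)
    obtain ⟨gbar, hgbar0, i₁, hi₁⟩ := rows_dependent_of_minors_zero (A.map π) hmap0
    have hlift : ∀ i, ∃ v : Polynomial Fq, π v = gbar i := fun i =>
      Ideal.Quotient.mk_surjective (gbar i)
    set u : Fin s → Polynomial Fq := fun i => (hlift i).choose %ₘ q with hudef
    have hπq : π q = 0 := by
      rw [hπdef, Ideal.Quotient.eq_zero_iff_mem, Ideal.mem_span_singleton]
    have hπu : ∀ i, π (u i) = gbar i := by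
      intro i
      have h1 : (hlift i).choose %ₘ q = (hlift i).choose - q * ((hlift i).choose /ₘ q) :=
        modByMonic_eq_sub_mul_div _ _
      rw [hudef]
      simp only [h1, map_sub, map_mul, hπq, zero_mul, sub_zero]
      exact (hlift i).choose_spec
    have hudeg : ∀ i, (u i).degree < q.degree := fun i => degree_modByMonic_lt _ hqmonic
    have hui₁ : u i₁ ≠ 0 := fun h0 => hi₁ (by rw [← hπu i₁, h0, map_zero])
    have hqdvdsum : ∀ j, q ∣ ∑ i, u i * A i j := by
      intro j
      rw [← Ideal.mem_span_singleton, ← Ideal.Quotient.eq_zero_iff_mem, ← hπdef, map_sum]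
      have : ∀ i, π (u i * A i j) = gbar i * (A.map π) i j := by
        intro i
        rw [map_mul, hπu]
        rfl
      rw [Finset.sum_congr rfl (fun i _ => this i)]
      exact hgbar0 j
    set w : Fin r → Polynomial Fq := fun j => (hqdvdsum j).choose with hwdef
    have hwspec : ∀ j, ∑ i, u i * A i j = q * w j := fun j => (hqdvdsum j).choose_spec
    have hsuppne : (Finset.univ.filter fun i => u i ≠ 0).Nonempty := ⟨i₁, by simp [hui₁]⟩
    obtain ⟨i₀, hi₀mem, hi₀max⟩ :=
      Finset.exists_max_image _ (fun i => (u i).natDegree + Nrow i) hsuppne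
    have hui₀ : u i₀ ≠ 0 := by simpa using (Finset.mem_filter.1 hi₀mem).2
    set e := (u i₀).natDegree with hedef
    set dq := q.natDegree with hdqdef
    have he_lt : e < dq := by
      have h1 := hudeg i₀
      rw [Polynomial.degree_eq_natDegree hui₀, Polynomial.degree_eq_natDegree hqne] at h1
      exact_mod_cast h1
    have hsumdeg : ∀ j, (∑ i, u i * A i j).degree ≤ ((e + Nrow i₀ : ℕ) : WithBot ℕ) := by
      intro j
      refine le_trans (Polynomial.degree_sum_le _ _) ?_
      rw [Finset.sup_le_iff]
      intro i _
      rcases eq_or_ne (u i) 0 with h0 | h0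
      · simp [h0]
      · have hmem : i ∈ Finset.univ.filter fun i => u i ≠ 0 := by simp [h0]
        have hle := hi₀max i hmem
        calc (u i * A i j).degree ≤ (u i).degree + (A i j).degree := Polynomial.degree_mul_le _ _
          _ ≤ ((u i).natDegree : WithBot ℕ) + ((Nrow i : ℕ) : WithBot ℕ) :=
              add_le_add (le_of_eq (Polynomial.degree_eq_natDegree h0)) (hdeg i j)
          _ = (((u i).natDegree + Nrow i : ℕ) : WithBot ℕ) := by push_cast; rfl
          _ ≤ _ := by exact_mod_cast hle
    set A' := A.updateRow i₀ w with hA'def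
    have hdetrel : ∀ c : Fin s ↪ Fin r,
        q * (A'.submatrix id c).det = u i₀ * (A.submatrix id c).det := by
      intro c
      set B := A.submatrix id ⇑c with hBdef
      have h1 : A'.submatrix id ⇑c = B.updateRow i₀ (fun j => w (c j)) := by
        ext i j
        by_cases hii : i = i₀
        · subst hii
          simp [hA'def, hBdef, Matrix.updateRow_self, Matrix.submatrix_apply]
        · simp [hA'def, hBdef, Matrix.updateRow_ne hii, Matrix.submatrix_apply]
      have h2 : q * (B.updateRow i₀ fun j => w (c j)).det
          = (B.updateRow i₀ (q • fun j => w (c j))).det :=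
        (Matrix.det_updateRow_smul B i₀ q fun j => w (c j)).symm
      have h3 : (q • fun j => w (c j)) = ∑ kk, u kk • B kk := by
        funext j
        simp only [Pi.smul_apply, smul_eq_mul, Finset.sum_apply, hBdef,
          Matrix.submatrix_apply, id_eq]
        rw [← hwspec (c j)]
      rw [h1, h2, h3, Matrix.det_updateRow_sum]
      simp [smul_eq_mul]
    have hN0 : dq ≤ e + Nrow i₀ := by
      by_contra hlt
      push_neg at hlt
      have hz : ∀ j, (∑ i, u i * A i j) = 0 := by
        intro j
        refine Polynomial.eq_zero_of_dvd_of_degree_lt (hqdvdsum j) ?_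
        refine lt_of_le_of_lt (hsumdeg j) ?_
        rw [Polynomial.degree_eq_natDegree hqne]
        exact_mod_cast hlt
      have hw0 : ∀ j, w j = 0 := by
        intro j
        have h1 := hwspec j
        rw [hz j] at h1
        exact (mul_eq_zero.1 h1.symm).resolve_left hqne
      have hdet0 : (A'.submatrix id c₀).det = 0 := by
        apply Matrix.det_eq_zero_of_row_eq_zero i₀
        intro j
        simp [hA'def, Matrix.submatrix_apply, Matrix.updateRow_self, hw0]
      have h1 := hdetrel c₀
      rw [hdet0, mul_zero] at h1
      exact hc₀ ((mul_eq_zero.1 h1.symm).resolve_left hui₀)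
    set N' : Fin s → ℕ := Function.update Nrow i₀ (e + Nrow i₀ - dq) with hN'def
    have hdeg' : ∀ i j, (A' i j).degree ≤ (N' i : ℕ) := by
      intro i j
      by_cases hii : i = i₀
      · rw [hii, hN'def]
        simp only [Function.update_self]
        have hwj : A' i₀ j = w j := by simp [hA'def, Matrix.updateRow_self]
        rw [hwj]
        rcases eq_or_ne (w j) 0 with h0 | h0
        · simp [h0]
        · have h1 : (q * w j).degree ≤ ((e + Nrow i₀ : ℕ) : WithBot ℕ) := by
            rw [← hwspec j]; exact hsumdeg j
          rw [Polynomial.degree_mul, Polynomial.degree_eq_natDegree hqne,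
            Polynomial.degree_eq_natDegree h0] at h1
          rw [Polynomial.degree_eq_natDegree h0]
          have h2 : dq + (w j).natDegree ≤ e + Nrow i₀ := by exact_mod_cast h1
          exact_mod_cast (by omega : (w j).natDegree ≤ e + Nrow i₀ - dq)
      · rw [hN'def]
        simp only [Function.update_of_ne hii]
        have h1 : A' i j = A i j := by simp [hA'def, Matrix.updateRow_ne hii]
        rw [h1]
        exact hdeg i j
    have hsum' : (∑ i, N' i) + dq = (∑ i, Nrow i) + e := by
      rw [hN'def, Finset.sum_update_of_mem (Finset.mem_univ i₀)]
      have h2 := Finset.sum_eq_sum_sdiff_singleton_add (Finset.mem_univ i₀) Nrow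
      omega
    have hGrel : q * gcdMinors A' = normalize (u i₀) * G := by
      have h1 : (Finset.univ.gcd fun c : Fin s ↪ Fin r => q * (A'.submatrix id c).det)
          = (Finset.univ.gcd fun c : Fin s ↪ Fin r => u i₀ * (A.submatrix id c).det) :=
        Finset.gcd_congr rfl (fun c _ => hdetrel c)
      rw [Finset.gcd_mul_left, Finset.gcd_mul_left, hqmonic.normalize_eq_self] at h1
      exact h1
    have hG'ne : gcdMinors A' ≠ 0 := by
      intro h0
      rw [h0, mul_zero] at hGrel
      exact (mul_ne_zero (fun hh => hui₀ (normalize_eq_zero.1 hh)) hGne) hGrel.symm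
    have hnormdeg : (normalize (u i₀)).natDegree = e := by
      apply Polynomial.natDegree_eq_of_degree_eq
      exact Polynomial.degree_normalize
    have hdeg_rel : dq + (gcdMinors A').natDegree = e + G.natDegree := by
      have h1 := congrArg Polynomial.natDegree hGrel
      rw [Polynomial.natDegree_mul hqne hG'ne,
        Polynomial.natDegree_mul (fun hh => hui₀ (normalize_eq_zero.1 hh)) hGne,
        hnormdeg] at h1
      omega
    have hdet'ne : (A'.submatrix id c₀).det ≠ 0 := by
      intro h0
      have h1 := hdetrel c₀
      rw [h0, mul_zero] at h1
      exact hc₀ ((mul_eq_zero.1 h1.symm).resolve_left hui₀)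
    have hd'le : (gcdMinors A').natDegree ≤ ∑ i, N' i :=
      le_trans (Polynomial.natDegree_le_of_dvd (Finset.gcd_dvd (Finset.mem_univ c₀)) hdet'ne)
        (natDegree_le_iff_degree_le.2 (det_degree_le _ N' (fun i j => hdeg' i (c₀ j))))
    have hlt : (∑ i, N' i) < n := by omega
    obtain ⟨x, hx0, hx'mul, hxdeg⟩ := IH (∑ i, N' i) hlt N' A' rfl hdeg'
    have hbeq : ((∑ i, N' i) - (gcdMinors A').natDegree) / (r - s)
        = ((∑ i, Nrow i) - G.natDegree) / (r - s) := by
      congr 1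
      omega
    rw [hbeq] at hxdeg
    refine ⟨x, hx0, ?_, hxdeg⟩
    have hne0 : ∀ i, i ≠ i₀ → A.mulVec x i = 0 := by
      intro i hii
      have h1 : A.mulVec x i = A'.mulVec x i := by
        simp [Matrix.mulVec, dotProduct, hA'def, Matrix.updateRow_ne hii]
      rw [h1, hx'mul]
      rfl
    have hA'i₀ : A'.mulVec x i₀ = ∑ j, w j * x j := by
      simp [Matrix.mulVec, dotProduct, hA'def, Matrix.updateRow_self]
    have hsum2 : ∑ i, u i * A.mulVec x i = q * (A'.mulVec x i₀) := by
      calc ∑ i, u i * A.mulVec x i = ∑ i, ∑ j, u i * (A i j * x j) := by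
            simp only [Matrix.mulVec, dotProduct, Finset.mul_sum]
        _ = ∑ j, ∑ i, u i * (A i j * x j) := Finset.sum_comm
        _ = ∑ j, (∑ i, u i * A i j) * x j := by
            refine Finset.sum_congr rfl (fun j _ => ?_)
            rw [Finset.sum_mul]
            exact Finset.sum_congr rfl (fun i _ => by ring)
        _ = ∑ j, (q * w j) * x j := by
            refine Finset.sum_congr rfl (fun j _ => ?_)
            rw [hwspec j]
        _ = q * ∑ j, w j * x j := by
            rw [Finset.mul_sum]
            exact Finset.sum_congr rfl (fun j _ => by ring)
        _ = q * (A'.mulVec x i₀) := by rw [hA'i₀]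
    have hsum1 : ∑ i, u i * A.mulVec x i = u i₀ * A.mulVec x i₀ :=
      Finset.sum_eq_single i₀ (fun b _ hb => by rw [hne0 b hb, mul_zero])
        (fun h => absurd (Finset.mem_univ i₀) h)
    have hi₀0 : A.mulVec x i₀ = 0 := by
      have hkey : u i₀ * A.mulVec x i₀ = 0 := by
        rw [← hsum1, hsum2, hx'mul]
        simp
      exact (mul_eq_zero.1 hkey).resolve_left hui₀
    funext i
    by_cases hii : i = i₀
    · rw [hii]; exact hi₀0
    · exact hne0 i hii

theorem stmt2 {Fq : Type*} [Field Fq] (s r : ℕ) (hrs : s < r)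
    (A : Matrix (Fin s) (Fin r) (Polynomial Fq)) (hrank : A.rank = s)
    (N : ℕ) (hN : ∀ i j, (A i j).degree ≤ (N : ℕ))
    (D : Polynomial Fq)
    (hDdvd : ∀ c : Fin s ↪ Fin r, D ∣ (A.submatrix id c).det)
    (hDgcd : ∀ D' : Polynomial Fq, (∀ c : Fin s ↪ Fin r, D' ∣ (A.submatrix id c).det) → D' ∣ D) :
    ∃ x : Fin r → Polynomial Fq, x ≠ 0 ∧ A.mulVec x = 0 ∧
      ∀ i, ((x i).natDegree : ℝ) ≤ ((s : ℝ) * N - D.natDegree) / (r - s) := by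
  letI := Classical.decEq Fq
  have hDG : Associated D (gcdMinors A) := by
    rcases eq_or_ne (gcdMinors A) 0 with h0 | h0
    · have h1 : gcdMinors A ∣ D := hDgcd _ (fun c => Finset.gcd_dvd (Finset.mem_univ c))
      rw [h0] at h1
      rw [zero_dvd_iff.1 h1, h0]
    · exact associated_of_dvd_dvd (Finset.dvd_gcd (fun c _ => hDdvd c))
        (hDgcd _ (fun c => Finset.gcd_dvd (Finset.mem_univ c)))
  have hdeq : D.natDegree = (gcdMinors A).natDegree :=
    Polynomial.natDegree_eq_of_degree_eq (degree_eq_degree_of_associated hDG)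
  have hSN : (∑ _i : Fin s, N) = s * N := by
    simp [Finset.sum_const, Finset.card_univ, smul_eq_mul]
  have hdle : (gcdMinors A).natDegree ≤ s * N := by
    rcases eq_or_ne (gcdMinors A) 0 with h0 | h0
    · simp [h0]
    · have hminor : ∃ c₀ : Fin s ↪ Fin r, (A.submatrix id c₀).det ≠ 0 := by
        by_contra hall
        push_neg at hall
        exact h0 (Finset.gcd_eq_zero_iff.2 fun c _ => hall c)
      obtain ⟨c₀, hc₀⟩ := hminor
      refine le_trans (Polynomial.natDegree_le_of_dvd (Finset.gcd_dvd (Finset.mem_univ c₀)) hc₀) ?_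
      have := det_degree_le (A.submatrix id c₀) (fun _ => N) (fun i j => hN i (c₀ j))
      rw [hSN] at this
      exact natDegree_le_iff_degree_le.2 this
  obtain ⟨x, hx0, hxmul, hxdeg⟩ :=
    siegel_main hrs (∑ _i : Fin s, N) (fun _ => N) A rfl (fun i j => hN i j)
  refine ⟨x, hx0, hxmul, ?_⟩
  intro i
  have hb := hxdeg i
  rw [hSN, ← hdeq] at hb
  have hnat : (x i).natDegree ≤ (s * N - D.natDegree) / (r - s) := by
    rcases eq_or_ne (x i) 0 with h0 | h0
    · simp [h0]
    · have := (Polynomial.natDegree_lt_iff_degree_lt h0).2 hb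
      omega
  have hfin : ((x i).natDegree : ℝ) ≤ (((s * N - D.natDegree) / (r - s) : ℕ) : ℝ) :=
    Nat.cast_le.2 hnat
  have h2 : (((s * N - D.natDegree) / (r - s) : ℕ) : ℝ)
      ≤ ((s * N - D.natDegree : ℕ) : ℝ) / ((r - s : ℕ) : ℝ) := Nat.cast_div_le
  have hdleD : D.natDegree ≤ s * N := hdeq ▸ hdle
  have h3 : ((s * N - D.natDegree : ℕ) : ℝ) = (s : ℝ) * N - D.natDegree := by
    rw [Nat.cast_sub hdleD]
    push_cast
    ring
  have h4 : ((r - s : ℕ) : ℝ) = (r : ℝ) - s := by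
    rw [Nat.cast_sub hrs.le]
  calc ((x i).natDegree : ℝ) ≤ _ := hfin
    _ ≤ ((s * N - D.natDegree : ℕ) : ℝ) / ((r - s : ℕ) : ℝ) := h2
    _ = ((s : ℝ) * N - D.natDegree) / ((r : ℝ) - s) := by rw [h3, h4]
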